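/- For all positive integers m and k with m ≤ k < 2^m, there exists a set S of k distinct positive integers such that CM(S) = m; that is, every value between the lower bound ⌊log₂ k⌋ + 1 and the upper bound k is attained as a Cookie Monster number of a set of k jars. -/

import Mathlib

/-- The Cookie Monster number of a finite set `S` of jar contents: the least `n`
for which there exist positive move amounts `a_1, …, a_n` such that every `s ∈ S`
is the sum of a subset of the move amounts. -/
noncomputable def CM (S : Finset ℕ) : ℕ :=
  sInf {n : ℕ | ∃ a : Fin n → ℕ, (∀ i, 0 < a i) ∧
    ∀ s ∈ S, ∃ I : Finset (Fin n), ∑ i ∈ I, a i = s}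

private lemma sum_union_le' {n : ℕ} (s t : Finset (Fin n)) (a : Fin n → ℕ) :
    ∑ i ∈ s ∪ t, a i ≤ ∑ i ∈ s, a i + ∑ i ∈ t, a i := by
  have := Finset.sum_union_inter (s₁ := s) (s₂ := t) (f := a)
  omega

private lemma sum_biUnion_le' {n : ℕ} (s : Finset ℕ) (f : ℕ → Finset (Fin n))
    (a : Fin n → ℕ) : ∑ i ∈ s.biUnion f, a i ≤ ∑ j ∈ s, ∑ i ∈ f j, a i := by
  classical
  refine Finset.induction_on s (by simp) ?_
  intro x s hx ih
  rw [Finset.biUnion_insert, Finset.sum_insert hx]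
  exact le_trans (sum_union_le' _ _ _) (by omega)

/-- If all powers `2^j`, `j < m`, are subset sums of `a` restricted to `T`,
then `m ≤ T.card`. -/
private lemma lower_aux {n : ℕ} (a : Fin n → ℕ) :
    ∀ m : ℕ, ∀ T : Finset (Fin n),
      (∀ j < m, ∃ I : Finset (Fin n), I ⊆ T ∧ ∑ i ∈ I, a i = 2 ^ j) →
      m ≤ T.card := by
  classical
  intro m
  induction m with
  | zero => intro T _; exact Nat.zero_le _
  | succ m ih =>
    intro T h
    -- choose representations for j < m
    choose! I hIT hIsum using fun j (hj : j < m) => h j (hj.trans (Nat.lt_succ_self m))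
    obtain ⟨Im, hImT, hImsum⟩ := h m (Nat.lt_succ_self m)
    -- find i0 ∈ Im not in any I j
    have hex : ∃ i0 ∈ Im, ∀ j < m, i0 ∉ I j := by
      by_contra hcon
      push_neg at hcon
      have hsub : Im ⊆ (Finset.range m).biUnion I := by
        intro i hi
        obtain ⟨j, hj, hij⟩ := hcon i hi
        exact Finset.mem_biUnion.2 ⟨j, Finset.mem_range.2 hj, hij⟩
      have h1 : ∑ i ∈ Im, a i ≤ ∑ i ∈ (Finset.range m).biUnion I, a i :=
        Finset.sum_le_sum_of_subset hsub
      have h2 : ∑ i ∈ (Finset.range m).biUnion I, a i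
          ≤ ∑ j ∈ Finset.range m, ∑ i ∈ I j, a i := sum_biUnion_le' _ _ _
      have h3 : ∑ j ∈ Finset.range m, ∑ i ∈ I j, a i = 2 ^ m - 1 := by
        rw [Finset.sum_congr rfl fun j hj => hIsum j (Finset.mem_range.1 hj)]
        have := Nat.geomSum_eq (le_refl 2) m
        simp [this]
      have hlt : (1 : ℕ) ≤ 2 ^ m := Nat.one_le_two_pow
      omega
    obtain ⟨i0, hi0Im, hi0⟩ := hex
    have hi0T : i0 ∈ T := hImT hi0Im
    have := ih (T.erase i0) (fun j hj => ⟨I j, fun i hi => by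
      refine Finset.mem_erase.2 ⟨?_, hIT j hj hi⟩
      rintro rfl; exact hi0 j hj hi, hIsum j hj⟩)
    have hcard : (T.erase i0).card = T.card - 1 := Finset.card_erase_of_mem hi0T
    have : 0 < T.card := Finset.card_pos.2 ⟨i0, hi0T⟩
    omega

/-- Every `0 < s < 2^m` is a sum of distinct powers `2^i`, `i < m`. -/
private lemma binary_aux {m s : ℕ} (hs : s < 2 ^ m) :
    ∃ I : Finset (Fin m), ∑ i ∈ I, 2 ^ (i : ℕ) = s := by
  classical
  have hb : ∀ i ∈ s.bitIndices.toFinset, i < m := by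
    intro i hi
    have h2 : 2 ^ i ≤ s := Nat.two_pow_le_of_mem_bitIndices (List.mem_toFinset.1 hi)
    exact (Nat.pow_lt_pow_iff_right (le_refl 2)).1 (lt_of_le_of_lt h2 hs)
  refine ⟨(s.bitIndices.toFinset).attachFin hb, ?_⟩
  rw [show ∑ i ∈ (s.bitIndices.toFinset).attachFin hb, 2 ^ (i : ℕ)
      = ∑ j ∈ s.bitIndices.toFinset, 2 ^ j from
    Finset.sum_bij (fun i _ => (i : ℕ))
      (fun i hi => (Finset.mem_attachFin hb).1 hi)
      (fun i _ j _ h => Fin.ext h)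
      (fun j hj => ⟨⟨j, hb j hj⟩, (Finset.mem_attachFin hb).2 hj, rfl⟩)
      (fun i _ => rfl)]
  exact Finset.twoPowSum_toFinset_bitIndices s

/-- For all positive integers `m ≤ k < 2^m`, there is a set of `k` jars whose
Cookie Monster number is exactly `m`. -/
theorem cm_every_value_attained (m k : ℕ) (hm : 0 < m) (hmk : m ≤ k)
    (hk : k < 2 ^ m) :
    ∃ S : Finset ℕ, (∀ s ∈ S, 0 < s) ∧ S.card = k ∧ CM S = m := by
  classical
  set T : Finset ℕ := (Finset.range m).image (2 ^ ·) with hT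
  have hTcard : T.card = m := by
    rw [hT, Finset.card_image_of_injective _ (Nat.pow_right_injective (le_refl 2)),
      Finset.card_range]
  have h2m : 1 ≤ 2 ^ m := Nat.one_le_two_pow
  have hTsub : T ⊆ Finset.Icc 1 (2 ^ m - 1) := by
    intro x hx
    rw [hT] at hx
    obtain ⟨j, hj, rfl⟩ := Finset.mem_image.1 hx
    have hj' : j < m := Finset.mem_range.1 hj
    have : 2 ^ j < 2 ^ m := Nat.pow_lt_pow_right (by norm_num) hj'
    have : 1 ≤ 2 ^ j := Nat.one_le_two_pow
    simp only [Finset.mem_Icc]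
    omega
  have hIccCard : (Finset.Icc 1 (2 ^ m - 1)).card = 2 ^ m - 1 := by
    rw [Nat.card_Icc]; omega
  obtain ⟨S, hTS, hSIcc, hScard⟩ :=
    Finset.exists_subsuperset_card_eq hTsub (hTcard ▸ hmk) (by omega)
  refine ⟨S, ?_, hScard, ?_⟩
  · intro s hs
    have := Finset.mem_Icc.1 (hSIcc hs)
    omega
  · -- CM S = m
    have hmem : m ∈ {n : ℕ | ∃ a : Fin n → ℕ, (∀ i, 0 < a i) ∧
        ∀ s ∈ S, ∃ I : Finset (Fin n), ∑ i ∈ I, a i = s} := by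
      refine ⟨fun i => 2 ^ (i : ℕ), fun i => Nat.pow_pos (by norm_num), ?_⟩
      intro s hs
      have hsIcc := Finset.mem_Icc.1 (hSIcc hs)
      exact binary_aux (by omega)
    refine le_antisymm (Nat.sInf_le hmem) ?_
    refine le_csInf ⟨m, hmem⟩ ?_
    rintro n ⟨a, hapos, ha⟩
    have hrep : ∀ j < m, ∃ I : Finset (Fin n), I ⊆ Finset.univ ∧ ∑ i ∈ I, a i = 2 ^ j := by
      intro j hj
      have h2j : (2 ^ j : ℕ) ∈ S := hTS (by
        rw [hT]; exact Finset.mem_image.2 ⟨j, Finset.mem_range.2 hj, rfl⟩)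
      obtain ⟨I, hI⟩ := ha _ h2j
      exact ⟨I, Finset.subset_univ I, hI⟩
    have := lower_aux a m Finset.univ hrep
    simpa using this
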